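/- For the recurrence with q_0 = 0, p_0 = 1 and q_k = q_{k-1} + h_k p_{k-1}, p_k = -z g_k q_{k-1} + p_{k-1}, the coefficient of (-z)^l in q_k equals the sum over pairs I ∈ C({1,…,k}, l+1), J ∈ C({1,…,k}, l) with i_1 < j_1 < i_2 < j_2 < … < i_l < j_l < i_{l+1} of the products h_I g_J. -/

import Mathlib

open Polynomial Finset
open scoped Classical

def interQ (l : ℕ) (IJ : Finset ℕ × Finset ℕ) : Prop :=
  ∃ (hI : IJ.1.card = l + 1) (hJ : IJ.2.card = l),
    (∀ (a : Fin (l + 1)) (b : Fin l), (a : ℕ) = (b : ℕ) →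
      IJ.1.orderEmbOfFin hI a < IJ.2.orderEmbOfFin hJ b) ∧
    (∀ (b : Fin l) (a : Fin (l + 1)), (b : ℕ) + 1 = (a : ℕ) →
      IJ.2.orderEmbOfFin hJ b < IJ.1.orderEmbOfFin hI a)

def interP (l : ℕ) (IJ : Finset ℕ × Finset ℕ) : Prop :=
  ∃ (hI : IJ.1.card = l) (hJ : IJ.2.card = l),
    (∀ (a b : Fin l), (a : ℕ) = (b : ℕ) →
      IJ.1.orderEmbOfFin hI a < IJ.2.orderEmbOfFin hJ b) ∧
    (∀ (b a : Fin l), (b : ℕ) + 1 = (a : ℕ) →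
      IJ.2.orderEmbOfFin hJ b < IJ.1.orderEmbOfFin hI a)

noncomputable def Sq (k l : ℕ) : Finset (Finset ℕ × Finset ℕ) :=
  ((Icc 1 k).powerset ×ˢ (Icc 1 k).powerset).filter (interQ l)
noncomputable def Sp (k l : ℕ) : Finset (Finset ℕ × Finset ℕ) :=
  ((Icc 1 k).powerset ×ˢ (Icc 1 k).powerset).filter (interP l)

lemma strictMono_snoc {n : ℕ} (f : Fin n → ℕ) (m : ℕ) (hf : StrictMono f)
    (hm : ∀ i, f i < m) : StrictMono (Fin.snoc f m) := by
  intro a b hab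
  rcases Fin.eq_castSucc_or_eq_last b with ⟨b', rfl⟩ | rfl
  · have ha : a ≠ Fin.last n := by
      intro hh
      rw [hh] at hab
      exact absurd hab (not_lt.2 (Fin.le_last _))
    obtain ⟨a', rfl⟩ := Fin.exists_castSucc_eq.2 ha
    simp only [Fin.snoc_castSucc]
    exact hf (by exact_mod_cast hab)
  · obtain ⟨a', rfl⟩ := Fin.exists_castSucc_eq.2 (ne_of_lt hab)
    simp only [Fin.snoc_castSucc, Fin.snoc_last]
    exact hm a'

lemma orderEmbOfFin_insert {s : Finset ℕ} {n : ℕ} (hs : s.card = n) {m : ℕ}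
    (hm : ∀ x ∈ s, x < m) (h' : (insert m s).card = n + 1) :
    ⇑((insert m s).orderEmbOfFin h') = Fin.snoc (fun i => s.orderEmbOfFin hs i) m := by
  refine (Finset.orderEmbOfFin_unique h' (f := Fin.snoc (fun i => s.orderEmbOfFin hs i) m)
    ?_ ?_).symm
  · intro x
    rcases Fin.eq_castSucc_or_eq_last x with ⟨x', rfl⟩ | rfl
    · simp [Fin.snoc_castSucc]
    · simp
  · exact strictMono_snoc _ _ (fun a b hab => (s.orderEmbOfFin hs).strictMono hab)
      (fun i => hm _ (by simp))

lemma orderEmbOfFin_eq_snoc {I : Finset ℕ} {l m : ℕ} (hI : I.card = l + 1)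
    (hm : m ∈ I) (hmax : ∀ x ∈ I, x ≤ m) (h' : (I.erase m).card = l) :
    ⇑(I.orderEmbOfFin hI) = Fin.snoc (fun i => (I.erase m).orderEmbOfFin h' i) m := by
  refine (Finset.orderEmbOfFin_unique hI ?_ ?_).symm
  · intro x
    rcases Fin.eq_castSucc_or_eq_last x with ⟨x', rfl⟩ | rfl
    · simp only [Fin.snoc_castSucc]
      exact mem_of_mem_erase (orderEmbOfFin_mem _ _ _)
    · simpa using hm
  · refine strictMono_snoc _ _ (fun a b hab => ((I.erase m).orderEmbOfFin h').strictMono hab)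
      fun i => ?_
    have h1 := orderEmbOfFin_mem (I.erase m) h' i
    have h2 := hmax _ (mem_of_mem_erase h1)
    have h3 := ne_of_mem_erase h1
    omega

lemma mem_exists_orderEmbOfFin {s : Finset ℕ} {n : ℕ} (h : s.card = n) {x : ℕ}
    (hx : x ∈ s) : ∃ i, s.orderEmbOfFin h i = x := by
  have h1 : x ∈ Set.range (s.orderEmbOfFin h) := by
    rw [Finset.range_orderEmbOfFin]; exact_mod_cast hx
  exact h1

lemma interQ_insert {l k : ℕ} {I J : Finset ℕ} (hIk : ∀ x ∈ I, x ≤ k) (hJk : ∀ x ∈ J, x ≤ k)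
    (h : interP l (I, J)) : interQ l (insert (k + 1) I, J) := by
  obtain ⟨hI, hJ, h1, h2⟩ := h
  dsimp only at hI hJ h1 h2
  have hnot : (k + 1) ∉ I := fun hx => by have := hIk _ hx; omega
  have hcard : (insert (k + 1) I).card = l + 1 := by
    rw [card_insert_of_notMem hnot, hI]
  have hemb : ⇑((insert (k + 1) I).orderEmbOfFin hcard)
      = Fin.snoc (fun i => I.orderEmbOfFin hI i) (k + 1) :=
    orderEmbOfFin_insert hI (fun x hx => Nat.lt_succ_of_le (hIk x hx)) hcard
  refine ⟨hcard, hJ, ?_, ?_⟩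
  · dsimp only
    intro a b hab
    have ha : a ≠ Fin.last l := by
      intro hh; rw [hh] at hab
      have := b.isLt; simp [Fin.val_last] at hab; omega
    obtain ⟨a', rfl⟩ := Fin.exists_castSucc_eq.2 ha
    have e : ((insert (k + 1) I).orderEmbOfFin hcard) a'.castSucc = I.orderEmbOfFin hI a' := by
      simpa using congrFun hemb a'.castSucc
    rw [e]
    exact h1 a' b (by simpa using hab)
  · dsimp only
    intro b a hab
    rcases Fin.eq_castSucc_or_eq_last a with ⟨a', rfl⟩ | rfl
    · have e : ((insert (k + 1) I).orderEmbOfFin hcard) a'.castSucc = I.orderEmbOfFin hI a' := by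
        simpa using congrFun hemb a'.castSucc
      rw [e]
      exact h2 b a' (by simpa using hab)
    · have e : ((insert (k + 1) I).orderEmbOfFin hcard) (Fin.last l) = k + 1 := by
        simpa using congrFun hemb (Fin.last l)
      rw [e]
      have := hJk _ (orderEmbOfFin_mem J hJ b)
      omega

lemma interP_insert {l k : ℕ} {I J : Finset ℕ} (hIk : ∀ x ∈ I, x ≤ k) (hJk : ∀ x ∈ J, x ≤ k)
    (h : interQ l (I, J)) : interP (l + 1) (I, insert (k + 1) J) := by
  obtain ⟨hI, hJ, h1, h2⟩ := h
  dsimp only at hI hJ h1 h2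
  have hnot : (k + 1) ∉ J := fun hx => by have := hJk _ hx; omega
  have hcard : (insert (k + 1) J).card = l + 1 := by
    rw [card_insert_of_notMem hnot, hJ]
  have hemb : ⇑((insert (k + 1) J).orderEmbOfFin hcard)
      = Fin.snoc (fun i => J.orderEmbOfFin hJ i) (k + 1) :=
    orderEmbOfFin_insert hJ (fun x hx => Nat.lt_succ_of_le (hJk x hx)) hcard
  refine ⟨hI, hcard, ?_, ?_⟩
  · dsimp only
    intro a b hab
    rcases Fin.eq_castSucc_or_eq_last b with ⟨b', rfl⟩ | rfl
    · have e : ((insert (k + 1) J).orderEmbOfFin hcard) b'.castSucc = J.orderEmbOfFin hJ b' := by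
        simpa using congrFun hemb b'.castSucc
      rw [e]
      exact h1 a b' (by simpa using hab)
    · have e : ((insert (k + 1) J).orderEmbOfFin hcard) (Fin.last l) = k + 1 := by
        simpa using congrFun hemb (Fin.last l)
      rw [e]
      have := hIk _ (orderEmbOfFin_mem I hI a)
      omega
  · dsimp only
    intro b a hab
    have hb : b ≠ Fin.last l := by
      intro hh; rw [hh] at hab
      have := a.isLt; simp [Fin.val_last] at hab; omega
    obtain ⟨b', rfl⟩ := Fin.exists_castSucc_eq.2 hb
    have e : ((insert (k + 1) J).orderEmbOfFin hcard) b'.castSucc = J.orderEmbOfFin hJ b' := by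
      simpa using congrFun hemb b'.castSucc
    rw [e]
    exact h2 b' a (by simpa using hab)

lemma interQ_erase {l k : ℕ} {I J : Finset ℕ} (hIk : ∀ x ∈ I, x ≤ k + 1)
    (hk : k + 1 ∈ I) (h : interQ l (I, J)) :
    interP l (I.erase (k + 1), J) ∧ (∀ x ∈ I.erase (k + 1), x ≤ k) ∧ ∀ x ∈ J, x ≤ k := by
  obtain ⟨hI, hJ, h1, h2⟩ := h
  dsimp only at hI hJ h1 h2
  have h' : (I.erase (k + 1)).card = l := by
    rw [card_erase_of_mem hk, hI]
    omega
  have hemb := orderEmbOfFin_eq_snoc hI hk hIk h'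
  have hIk' : ∀ x ∈ I.erase (k + 1), x ≤ k := by
    intro x hx
    have hx1 := hIk _ (mem_of_mem_erase hx)
    have hx2 := ne_of_mem_erase hx
    omega
  have hJk : ∀ x ∈ J, x ≤ k := by
    intro x hx
    obtain ⟨b, rfl⟩ := mem_exists_orderEmbOfFin hJ hx
    have hlt := h2 b b.succ (by simp)
    have hmem := hIk _ (orderEmbOfFin_mem I hI b.succ)
    omega
  refine ⟨⟨h', hJ, ?_, ?_⟩, hIk', hJk⟩
  · dsimp only
    intro a b hab
    have e : I.orderEmbOfFin hI a.castSucc = (I.erase (k + 1)).orderEmbOfFin h' a := by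
      simpa using congrFun hemb a.castSucc
    have := h1 a.castSucc b (by simpa using hab)
    rw [e] at this
    exact this
  · dsimp only
    intro b a hab
    have e : I.orderEmbOfFin hI a.castSucc = (I.erase (k + 1)).orderEmbOfFin h' a := by
      simpa using congrFun hemb a.castSucc
    have := h2 b a.castSucc (by simpa using hab)
    rw [e] at this
    exact this

lemma interP_erase {l k : ℕ} {I J : Finset ℕ} (hJk : ∀ x ∈ J, x ≤ k + 1)
    (hk : k + 1 ∈ J) (h : interP (l + 1) (I, J)) :
    interQ l (I, J.erase (k + 1)) ∧ (∀ x ∈ I, x ≤ k) ∧ ∀ x ∈ J.erase (k + 1), x ≤ k := by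
  obtain ⟨hI, hJ, h1, h2⟩ := h
  dsimp only at hI hJ h1 h2
  have h' : (J.erase (k + 1)).card = l := by
    rw [card_erase_of_mem hk, hJ]
    omega
  have hemb := orderEmbOfFin_eq_snoc hJ hk hJk h'
  have hJk' : ∀ x ∈ J.erase (k + 1), x ≤ k := by
    intro x hx
    have hx1 := hJk _ (mem_of_mem_erase hx)
    have hx2 := ne_of_mem_erase hx
    omega
  have hIk : ∀ x ∈ I, x ≤ k := by
    intro x hx
    obtain ⟨a, rfl⟩ := mem_exists_orderEmbOfFin hI hx
    have hlt := h1 a a rfl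
    have hmem := hJk _ (orderEmbOfFin_mem J hJ a)
    omega
  refine ⟨⟨hI, h', ?_, ?_⟩, hIk, hJk'⟩
  · dsimp only
    intro a b hab
    have e : J.orderEmbOfFin hJ b.castSucc = (J.erase (k + 1)).orderEmbOfFin h' b := by
      simpa using congrFun hemb b.castSucc
    have := h1 a b.castSucc (by simpa using hab)
    rw [e] at this
    exact this
  · dsimp only
    intro b a hab
    have e : J.orderEmbOfFin hJ b.castSucc = (J.erase (k + 1)).orderEmbOfFin h' b := by
      simpa using congrFun hemb b.castSucc
    have := h2 b.castSucc a (by simpa using hab)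
    rw [e] at this
    exact this

lemma interQ_not_mem {l k : ℕ} {I J : Finset ℕ} (hIk : ∀ x ∈ I, x ≤ k + 1)
    (hk : k + 1 ∉ I) (h : interQ l (I, J)) : (∀ x ∈ I, x ≤ k) ∧ ∀ x ∈ J, x ≤ k := by
  obtain ⟨hI, hJ, h1, h2⟩ := h
  dsimp only at hI hJ h1 h2
  have hIk' : ∀ x ∈ I, x ≤ k := by
    intro x hx
    have h1' := hIk x hx
    have : x ≠ k + 1 := fun e => hk (e ▸ hx)
    omega
  refine ⟨hIk', fun x hx => ?_⟩
  obtain ⟨b, rfl⟩ := mem_exists_orderEmbOfFin hJ hx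
  have hlt := h2 b b.succ (by simp)
  have hmem := hIk' _ (orderEmbOfFin_mem I hI b.succ)
  omega

lemma interP_not_mem {l k : ℕ} {I J : Finset ℕ} (hJk : ∀ x ∈ J, x ≤ k + 1)
    (hk : k + 1 ∉ J) (h : interP l (I, J)) : (∀ x ∈ I, x ≤ k) ∧ ∀ x ∈ J, x ≤ k := by
  obtain ⟨hI, hJ, h1, h2⟩ := h
  dsimp only at hI hJ h1 h2
  have hJk' : ∀ x ∈ J, x ≤ k := by
    intro x hx
    have h1' := hJk x hx
    have : x ≠ k + 1 := fun e => hk (e ▸ hx)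
    omega
  refine ⟨fun x hx => ?_, hJk'⟩
  obtain ⟨a, rfl⟩ := mem_exists_orderEmbOfFin hI hx
  have hlt := h1 a a rfl
  have hmem := hJk' _ (orderEmbOfFin_mem J hJ a)
  omega

lemma mem_Sq {k l : ℕ} {IJ : Finset ℕ × Finset ℕ} :
    IJ ∈ Sq k l ↔ IJ.1 ⊆ Icc 1 k ∧ IJ.2 ⊆ Icc 1 k ∧ interQ l IJ := by
  simp [Sq, mem_filter, mem_product, and_assoc]

lemma mem_Sp {k l : ℕ} {IJ : Finset ℕ × Finset ℕ} :
    IJ ∈ Sp k l ↔ IJ.1 ⊆ Icc 1 k ∧ IJ.2 ⊆ Icc 1 k ∧ interP l IJ := by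
  simp [Sp, mem_filter, mem_product, and_assoc]

lemma Sq_zero (l : ℕ) : Sq 0 l = ∅ := by
  ext ⟨I, J⟩
  simp only [mem_Sq, notMem_empty, iff_false]
  rintro ⟨hIs, _, hI, -⟩
  have : I = ∅ := subset_empty.1 (by simpa using hIs)
  rw [this] at hI
  simp at hI

lemma Sp_zero (k : ℕ) : Sp k 0 = {(∅, ∅)} := by
  ext ⟨I, J⟩
  simp only [mem_Sp, mem_singleton, Prod.mk.injEq]
  constructor
  · rintro ⟨-, -, hI, hJ, -⟩
    exact ⟨card_eq_zero.1 hI, card_eq_zero.1 hJ⟩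
  · rintro ⟨rfl, rfl⟩
    exact ⟨empty_subset _, empty_subset _, rfl, rfl, fun a => a.elim0, fun a => a.elim0⟩

lemma Sp_zero_succ (l : ℕ) : Sp 0 (l + 1) = ∅ := by
  ext ⟨I, J⟩
  simp only [mem_Sp, notMem_empty, iff_false]
  rintro ⟨hIs, _, hI, -⟩
  have : I = ∅ := subset_empty.1 (by simpa using hIs)
  rw [this] at hI
  simp at hI

lemma sum_Sq_succ (k l : ℕ) (w : Finset ℕ × Finset ℕ → ℝ) :
    ∑ x ∈ Sq (k + 1) l, w x
      = ∑ x ∈ Sq k l, w x + ∑ x ∈ Sp k l, w (insert (k + 1) x.1, x.2) := by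
  have hsub : Icc 1 k ⊆ Icc 1 (k + 1) := Icc_subset_Icc_right (by omega)
  rw [← sum_filter_add_sum_filter_not (Sq (k + 1) l) (fun x => (k + 1) ∈ x.1) w, add_comm]
  congr 1
  · -- not-mem part = Sq k l
    have h1 : (Sq (k + 1) l).filter (fun x => ¬ (k + 1) ∈ x.1) = Sq k l := by
      ext ⟨I, J⟩
      simp only [mem_filter, mem_Sq]
      constructor
      · rintro ⟨⟨hIs, hJs, hint⟩, hnot⟩
        have hb := interQ_not_mem (fun x hx => (mem_Icc.1 (hIs hx)).2) hnot hint
        exact ⟨fun x hx => mem_Icc.2 ⟨(mem_Icc.1 (hIs hx)).1, hb.1 x hx⟩,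
          fun x hx => mem_Icc.2 ⟨(mem_Icc.1 (hJs hx)).1, hb.2 x hx⟩, hint⟩
      · rintro ⟨hIs, hJs, hint⟩
        exact ⟨⟨hIs.trans hsub, hJs.trans hsub, hint⟩,
          fun hm => by have := mem_Icc.1 (hIs hm); omega⟩
    rw [h1]
  · -- mem part bijects with Sp k l
    refine sum_bij' (i := fun x _ => (x.1.erase (k + 1), x.2))
      (j := fun x _ => (insert (k + 1) x.1, x.2)) ?_ ?_ ?_ ?_ ?_
    · rintro ⟨I, J⟩ hx
      rw [mem_filter] at hx
      obtain ⟨hmem, hk1⟩ := hx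
      rw [mem_Sq] at hmem
      obtain ⟨hIs, hJs, hint⟩ := hmem
      obtain ⟨hintP, hIk, hJk⟩ :=
        interQ_erase (fun x hx => (mem_Icc.1 (hIs hx)).2) hk1 hint
      rw [mem_Sp]
      exact ⟨fun x hx => mem_Icc.2 ⟨(mem_Icc.1 (hIs (mem_of_mem_erase hx))).1, hIk x hx⟩,
        fun x hx => mem_Icc.2 ⟨(mem_Icc.1 (hJs hx)).1, hJk x hx⟩, hintP⟩
    · rintro ⟨I, J⟩ hx
      rw [mem_Sp] at hx
      obtain ⟨hIs, hJs, hint⟩ := hx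
      rw [mem_filter, mem_Sq]
      refine ⟨⟨?_, hJs.trans hsub, interQ_insert (fun x hx => (mem_Icc.1 (hIs hx)).2)
        (fun x hx => (mem_Icc.1 (hJs hx)).2) hint⟩, by simp⟩
      intro x hx
      rcases mem_insert.1 hx with rfl | hx
      · exact mem_Icc.2 ⟨by omega, le_refl _⟩
      · exact hsub (hIs hx)
    · rintro ⟨I, J⟩ hx
      rw [mem_filter] at hx
      simp only [Prod.mk.injEq]
      exact ⟨insert_erase hx.2, trivial⟩
    · rintro ⟨I, J⟩ hx
      rw [mem_Sp] at hx
      have : (k + 1) ∉ I := fun hm => by have := mem_Icc.1 (hx.1 hm); omega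
      simp only [Prod.mk.injEq]
      exact ⟨erase_insert this, trivial⟩
    · rintro ⟨I, J⟩ hx
      rw [mem_filter] at hx
      congr 1
      simp only [Prod.mk.injEq]
      exact ⟨(insert_erase hx.2).symm, trivial⟩

lemma sum_Sp_succ (k l : ℕ) (w : Finset ℕ × Finset ℕ → ℝ) :
    ∑ x ∈ Sp (k + 1) (l + 1), w x
      = ∑ x ∈ Sp k (l + 1), w x + ∑ x ∈ Sq k l, w (x.1, insert (k + 1) x.2) := by
  have hsub : Icc 1 k ⊆ Icc 1 (k + 1) := Icc_subset_Icc_right (by omega)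
  rw [← sum_filter_add_sum_filter_not (Sp (k + 1) (l + 1)) (fun x => (k + 1) ∈ x.2) w, add_comm]
  congr 1
  · have h1 : (Sp (k + 1) (l + 1)).filter (fun x => ¬ (k + 1) ∈ x.2) = Sp k (l + 1) := by
      ext ⟨I, J⟩
      simp only [mem_filter, mem_Sp]
      constructor
      · rintro ⟨⟨hIs, hJs, hint⟩, hnot⟩
        have hb := interP_not_mem (fun x hx => (mem_Icc.1 (hJs hx)).2) hnot hint
        exact ⟨fun x hx => mem_Icc.2 ⟨(mem_Icc.1 (hIs hx)).1, hb.1 x hx⟩,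
          fun x hx => mem_Icc.2 ⟨(mem_Icc.1 (hJs hx)).1, hb.2 x hx⟩, hint⟩
      · rintro ⟨hIs, hJs, hint⟩
        exact ⟨⟨hIs.trans hsub, hJs.trans hsub, hint⟩,
          fun hm => by have := mem_Icc.1 (hJs hm); omega⟩
    rw [h1]
  · refine sum_bij' (i := fun x _ => (x.1, x.2.erase (k + 1)))
      (j := fun x _ => (x.1, insert (k + 1) x.2)) ?_ ?_ ?_ ?_ ?_
    · rintro ⟨I, J⟩ hx
      rw [mem_filter] at hx
      obtain ⟨hmem, hk1⟩ := hx
      rw [mem_Sp] at hmem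
      obtain ⟨hIs, hJs, hint⟩ := hmem
      obtain ⟨hintQ, hIk, hJk⟩ :=
        interP_erase (fun x hx => (mem_Icc.1 (hJs hx)).2) hk1 hint
      rw [mem_Sq]
      exact ⟨fun x hx => mem_Icc.2 ⟨(mem_Icc.1 (hIs hx)).1, hIk x hx⟩,
        fun x hx => mem_Icc.2 ⟨(mem_Icc.1 (hJs (mem_of_mem_erase hx))).1, hJk x hx⟩, hintQ⟩
    · rintro ⟨I, J⟩ hx
      rw [mem_Sq] at hx
      obtain ⟨hIs, hJs, hint⟩ := hx
      rw [mem_filter, mem_Sp]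
      refine ⟨⟨hIs.trans hsub, ?_, interP_insert (fun x hx => (mem_Icc.1 (hIs hx)).2)
        (fun x hx => (mem_Icc.1 (hJs hx)).2) hint⟩, by simp⟩
      intro x hx
      rcases mem_insert.1 hx with rfl | hx
      · exact mem_Icc.2 ⟨by omega, le_refl _⟩
      · exact hsub (hJs hx)
    · rintro ⟨I, J⟩ hx
      rw [mem_filter] at hx
      simp only [Prod.mk.injEq]
      exact ⟨trivial, insert_erase hx.2⟩
    · rintro ⟨I, J⟩ hx
      rw [mem_Sq] at hx
      have : (k + 1) ∉ J := fun hm => by have := mem_Icc.1 (hx.2.1 hm); omega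
      simp only [Prod.mk.injEq]
      exact ⟨trivial, erase_insert this⟩
    · rintro ⟨I, J⟩ hx
      rw [mem_filter] at hx
      congr 1
      simp only [Prod.mk.injEq]
      exact ⟨trivial, (insert_erase hx.2).symm⟩

lemma main_aux (g h : ℕ → ℝ) (q p : ℕ → ℝ[X])
    (hq0 : q 0 = 0) (hp0 : p 0 = 1)
    (hq : ∀ k, q (k + 1) = q k + C (h (k + 1)) * p k)
    (hp : ∀ k, p (k + 1) = -(X * C (g (k + 1))) * q k + p k) (k : ℕ) :
    (∀ l, (p k).coeff l = (-1 : ℝ) ^ l * ∑ x ∈ Sp k l, (∏ i ∈ x.1, h i) * ∏ j ∈ x.2, g j)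
      ∧ (∀ l, (q k).coeff l
          = (-1 : ℝ) ^ l * ∑ x ∈ Sq k l, (∏ i ∈ x.1, h i) * ∏ j ∈ x.2, g j) := by
  induction k with
  | zero =>
    constructor
    · intro l
      cases l with
      | zero => simp [hp0, Sp_zero]
      | succ l => simp [hp0, Sp_zero_succ, coeff_one]
    · intro l
      simp [hq0, Sq_zero]
  | succ k ih =>
    obtain ⟨ihp, ihq⟩ := ih
    constructor
    · intro l
      cases l with
      | zero =>
        rw [hp k, coeff_add, mul_coeff_zero]
        have e0 : (-(X * C (g (k + 1)))).coeff 0 = 0 := by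
          simp
        rw [e0, zero_mul, zero_add, ihp 0, Sp_zero, Sp_zero]
      | succ l =>
        have e : -(X * C (g (k + 1))) * q k = -(C (g (k + 1)) * (X * q k)) := by ring
        rw [hp k, e, coeff_add, coeff_neg, coeff_C_mul, coeff_X_mul, ihq l, ihp (l + 1),
          sum_Sp_succ]
        have hterm : ∑ x ∈ Sq k l, (∏ i ∈ (x.1, insert (k + 1) x.2).1, h i)
            * ∏ j ∈ (x.1, insert (k + 1) x.2).2, g j
            = ∑ x ∈ Sq k l, g (k + 1) * ((∏ i ∈ x.1, h i) * ∏ j ∈ x.2, g j) := by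
          refine sum_congr rfl fun x hx => ?_
          rw [mem_Sq] at hx
          have hnot : (k + 1) ∉ x.2 := fun hm => by have := mem_Icc.1 (hx.2.1 hm); omega
          dsimp only
          rw [prod_insert hnot]
          ring
        rw [hterm, ← mul_sum]
        ring
    · intro l
      rw [hq k, coeff_add, coeff_C_mul, ihq l, ihp l, sum_Sq_succ]
      have hterm : ∑ x ∈ Sp k l, (∏ i ∈ (insert (k + 1) x.1, x.2).1, h i)
          * ∏ j ∈ (insert (k + 1) x.1, x.2).2, g j
          = ∑ x ∈ Sp k l, h (k + 1) * ((∏ i ∈ x.1, h i) * ∏ j ∈ x.2, g j) := by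
        refine sum_congr rfl fun x hx => ?_
        rw [mem_Sp] at hx
        have hnot : (k + 1) ∉ x.1 := fun hm => by have := mem_Icc.1 (hx.1 hm); omega
        dsimp only
        rw [prod_insert hnot]
        ring
      rw [hterm, ← mul_sum]
      ring

open scoped Classical in
/-- The coefficient of `(-z)^l` in `q_k` equals the sum over interlacing pairs
`I ∈ C({1,…,k}, l+1)`, `J ∈ C({1,…,k}, l)` with
`i_1 < j_1 < … < i_l < j_l < i_{l+1}` of `h_I g_J`. -/
theorem stmt3 (g h : ℕ → ℝ) (q p : ℕ → ℝ[X])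
    (hq0 : q 0 = 0) (hp0 : p 0 = 1)
    (hq : ∀ k, q (k + 1) = q k + C (h (k + 1)) * p k)
    (hp : ∀ k, p (k + 1) = -(X * C (g (k + 1))) * q k + p k)
    (k l : ℕ) :
    (q k).coeff l = (-1 : ℝ) ^ l *
      ∑ IJ ∈ ((Finset.Icc 1 k).powerset ×ˢ (Finset.Icc 1 k).powerset).filter
        (fun IJ => ∃ (hI : IJ.1.card = l + 1) (hJ : IJ.2.card = l),
          (∀ (a : Fin (l + 1)) (b : Fin l), (a : ℕ) = (b : ℕ) →
            IJ.1.orderEmbOfFin hI a < IJ.2.orderEmbOfFin hJ b) ∧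
          (∀ (b : Fin l) (a : Fin (l + 1)), (b : ℕ) + 1 = (a : ℕ) →
            IJ.2.orderEmbOfFin hJ b < IJ.1.orderEmbOfFin hI a)),
        (∏ i ∈ IJ.1, h i) * (∏ j ∈ IJ.2, g j) := by
  have := (main_aux g h q p hq0 hp0 hq hp k).2 l
  rw [this, Sq]
  congr 1
  refine Finset.sum_congr (Finset.filter_congr fun x _ => Iff.rfl) fun x _ => rfl
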